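/- Let X₁,…,X_N be i.i.d. random variables taking values in [0,1] with mean μ, and let S_N = (1/N)Σ X_i. Then E[exp(N·kl(S_N || μ))] ≤ 2√N, where kl is the binary KL divergence. -/

import Mathlib

open MeasureTheory ProbabilityTheory
open scoped BigOperators

/-- Binary Kullback-Leibler divergence. -/
noncomputable def bkl (p q : ℝ) : ℝ :=
  p * Real.log (p / q) + (1 - p) * Real.log ((1 - p) / (1 - q))

open Finset Real

noncomputable def Fc (n : ℕ) (x y : ℝ) : ℝ :=
  ∑ k ∈ range (n+1), (n.choose k : ℝ) * (x + k)^k * (y + ((n - k : ℕ) : ℝ))^(n - k)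

noncomputable def Ac (n : ℕ) (x y : ℝ) : ℝ :=
  (y + n)^n + ∑ k ∈ range n,
    (n.choose (k+1) : ℝ) * x * (x + ((k+1 : ℕ) : ℝ))^k * (y + ((n - (k+1) : ℕ) : ℝ))^(n - (k+1))

noncomputable def Gc (n : ℕ) (s : ℝ) : ℝ :=
  ∑ i ∈ range (n+1), (n.descFactorial i : ℝ) * s^(n - i)

lemma Gc_succ (n : ℕ) (s : ℝ) : Gc (n+1) s = s^(n+1) + (n+1) * Gc n s := by
  rw [Gc, Finset.sum_range_succ', Gc, Finset.mul_sum]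
  simp only [Nat.succ_descFactorial_succ, Nat.descFactorial_zero]
  have h : ∀ k ∈ range (n+1), ((n+1) * n.descFactorial k : ℕ) * s ^ (n + 1 - (k+1))
      = ((n:ℝ)+1) * ((n.descFactorial k : ℝ) * s ^ (n - k)) := by
    intro k hk
    have : n + 1 - (k + 1) = n - k := by omega
    rw [this]; push_cast; ring
  rw [Finset.sum_congr rfl h, ← Finset.mul_sum]
  push_cast
  ring

lemma Fc_split (n : ℕ) (x y : ℝ) :
    Fc (n+1) x y = Ac (n+1) x y + (n+1) * Fc n (x+1) y := by
  rw [Fc, Finset.sum_range_succ']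
  have h0 : ((n+1).choose 0 : ℝ) * (x + (0:ℕ))^0 * (y + (((n+1) - 0 : ℕ) : ℝ))^((n+1) - 0)
      = (y + ((n+1 : ℕ) : ℝ))^(n+1) := by simp
  rw [h0]
  have hterm : ∀ k ∈ range (n+1),
      ((n+1).choose (k+1) : ℝ) * (x + ((k+1 : ℕ) : ℝ))^(k+1) * (y + (((n+1) - (k+1) : ℕ) : ℝ))^((n+1) - (k+1))
      = ((n+1).choose (k+1) : ℝ) * x * (x + ((k+1 : ℕ) : ℝ))^k * (y + (((n+1) - (k+1) : ℕ) : ℝ))^((n+1) - (k+1))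
        + (n+1 : ℝ) * ((n.choose k : ℝ) * ((x+1) + (k : ℝ))^k * (y + ((n - k : ℕ) : ℝ))^(n - k)) := by
    intro k hk
    have h1 : (n+1) - (k+1) = n - k := by omega
    have h2 : ((n:ℝ)+1) * (n.choose k : ℝ) = ((n+1).choose (k+1) : ℝ) * ((k:ℝ)+1) :=
      mod_cast congrArg (Nat.cast (R := ℝ)) (Nat.add_one_mul_choose_eq n k)
    rw [h1]
    push_cast
    rw [pow_succ]
    linear_combination (-((x + ((k:ℝ)+1))^k * (y + ((n - k : ℕ) : ℝ))^(n-k))) * h2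
  rw [Finset.sum_congr rfl hterm, Finset.sum_add_distrib]
  rw [Ac, Fc, Finset.mul_sum]
  push_cast
  ring

theorem Ac_Fc (n : ℕ) : ∀ x y : ℝ, Ac n x y = (x + y + n)^n ∧ Fc n x y = Gc n (x + y + n) := by
  induction n with
  | zero =>
    intro x y
    exact ⟨by simp [Ac], by simp [Fc, Gc]⟩
  | succ n ih =>
    intro x y
    have key : Ac (n+1) x y = (x + y + ((n+1 : ℕ) : ℝ))^(n+1) := by
      have hpascal : ∀ k ∈ range (n+1),
          ((n+1).choose (k+1) : ℝ) * x * (x + ((k+1:ℕ):ℝ))^k * (y + (((n+1)-(k+1) : ℕ) : ℝ))^((n+1)-(k+1))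
          = (n.choose k : ℝ) * x * ((x+1) + (k:ℝ))^k * (y + ((n - k : ℕ):ℝ))^(n-k)
            + (n.choose (k+1) : ℝ) * x * (x + ((k+1:ℕ):ℝ))^k * (y + ((n-k : ℕ):ℝ))^(n-k) := by
        intro k hk
        have h1 : (n+1)-(k+1) = n - k := by omega
        have hp : (((n+1).choose (k+1) : ℕ) : ℝ) = (n.choose k : ℝ) + (n.choose (k+1) : ℝ) := by
          exact_mod_cast congrArg (Nat.cast (R:=ℝ)) (Nat.choose_succ_succ n k)
        rw [h1, hp]
        push_cast
        ring
      rw [Ac, Finset.sum_congr rfl hpascal, Finset.sum_add_distrib]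
      have e1 : ∑ k ∈ range (n+1), (n.choose k : ℝ) * x * ((x+1) + (k:ℝ))^k * (y + ((n - k : ℕ):ℝ))^(n-k)
          = x * Fc n (x+1) y := by
        rw [Fc, Finset.mul_sum]
        exact Finset.sum_congr rfl fun k hk => by ring
      have e2 : ∑ k ∈ range (n+1), (n.choose (k+1) : ℝ) * x * (x + ((k+1:ℕ):ℝ))^k * (y + ((n-k : ℕ):ℝ))^(n-k)
          = (x + y + ((n+1:ℕ):ℝ)) * (∑ k ∈ range n,
              (n.choose (k+1) : ℝ) * x * (x + ((k+1 : ℕ) : ℝ))^k * ((y+1) + ((n - (k+1) : ℕ) : ℝ))^(n - (k+1)))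
            - x * (∑ k ∈ range n,
              (n.choose (k+1) : ℝ) * (x + ((k+1:ℕ):ℝ))^(k+1) * ((y+1) + ((n - (k+1) : ℕ) : ℝ))^(n - (k+1))) := by
        rw [Finset.sum_range_succ]
        simp only [Nat.choose_succ_self, Nat.cast_zero, zero_mul, add_zero]
        rw [Finset.mul_sum, Finset.mul_sum, ← Finset.sum_sub_distrib]
        refine Finset.sum_congr rfl fun k hk => ?_
        have hkn : k < n := Finset.mem_range.mp hk
        have h1 : n - k = (n - (k+1)) + 1 := by omega
        have h3 : ((n - (k+1) : ℕ) : ℝ) = (n : ℝ) - k - 1 := by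
          rw [Nat.cast_sub (by omega)]; push_cast; ring
        have h4 : ((n - (k+1) + 1 : ℕ) : ℝ) = (n:ℝ) - k := by
          push_cast [Nat.cast_sub (by omega : k + 1 ≤ n)]; ring
        rw [h1, h4, h3, pow_succ, pow_succ]
        push_cast
        ring
      rw [e1, e2]
      have hAc : (∑ k ∈ range n,
          (n.choose (k+1) : ℝ) * x * (x + ((k+1 : ℕ) : ℝ))^k * ((y+1) + ((n - (k+1) : ℕ) : ℝ))^(n - (k+1)))
          = Ac n x (y+1) - ((y+1) + (n:ℝ))^n := by
        rw [Ac]; ring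
      have hFc : (∑ k ∈ range n,
          (n.choose (k+1) : ℝ) * (x + ((k+1:ℕ):ℝ))^(k+1) * ((y+1) + ((n - (k+1) : ℕ) : ℝ))^(n - (k+1)))
          = Fc n x (y+1) - ((y+1) + (n:ℝ))^n := by
        rw [Fc, Finset.sum_range_succ']
        simp only [Nat.choose_zero_right, Nat.cast_one, Nat.cast_zero, add_zero, Nat.sub_zero, pow_zero,
          one_mul, mul_one]
        ring
      rw [hAc, hFc, (ih x (y+1)).1, (ih x (y+1)).2, (ih (x+1) y).2]
      have hs1 : x + (y+1) + (n:ℝ) = x + y + ((n+1:ℕ):ℝ) := by push_cast; ring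
      have hs2 : (x+1) + y + (n:ℝ) = x + y + ((n+1:ℕ):ℝ) := by push_cast; ring
      rw [hs1, hs2]
      push_cast
      ring
    refine ⟨key, ?_⟩
    rw [Fc_split, key, (ih (x+1) y).2]
    have hs : (x + 1) + y + (n : ℝ) = x + y + ((n+1 : ℕ) : ℝ) := by push_cast; ring
    rw [hs, Gc_succ]


lemma desc_ratio_le (n i : ℕ) (hn : 0 < n) :
    (n.descFactorial i : ℝ) / (n:ℝ)^i ≤ Real.exp (-((i:ℝ) * ((i:ℝ) - 1)) / (2 * n)) := by
  have hnn : (0:ℝ) < n := by exact_mod_cast hn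
  have hprod : (n.descFactorial i : ℝ) = ∏ m ∈ range i, ((n - m : ℕ) : ℝ) := by
    rw [Nat.descFactorial_eq_prod_range]; push_cast; rfl
  have heq : (n.descFactorial i : ℝ) / (n:ℝ)^i = ∏ m ∈ range i, ((n - m : ℕ) : ℝ) / n := by
    have hpow : (n:ℝ)^i = ∏ _m ∈ range i, (n:ℝ) := by simp
    rw [hprod, hpow, ← Finset.prod_div_distrib]
  rw [heq]
  have hle : ∀ m ∈ range i, ((n - m : ℕ) : ℝ) / n ≤ Real.exp (-(m:ℝ)/n) := by
    intro m _
    rcases le_or_gt m n with hm | hm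
    · rw [Nat.cast_sub hm]
      have h1 := Real.add_one_le_exp (-(m:ℝ)/n)
      have h2 : ((n:ℝ) - m)/n = -(m:ℝ)/n + 1 := by field_simp; ring
      rw [h2]; exact h1
    · have : n - m = 0 := by omega
      rw [this]
      simpa using le_of_lt (Real.exp_pos _)
  calc ∏ m ∈ range i, ((n - m : ℕ) : ℝ) / n
      ≤ ∏ m ∈ range i, Real.exp (-(m:ℝ)/n) :=
        Finset.prod_le_prod (fun m _ => by positivity) hle
    _ = Real.exp (∑ m ∈ range i, -(m:ℝ)/n) := (Real.exp_sum _ _).symm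
    _ = Real.exp (-((i:ℝ) * ((i:ℝ) - 1)) / (2 * n)) := by
        congr 1
        have hsum : (∑ m ∈ range i, (m:ℝ)) = (i:ℝ) * ((i:ℝ) - 1) / 2 := by
          cases i with
          | zero => simp
          | succ j =>
            have h2 := Finset.sum_range_id_mul_two (j+1)
            have h3 : ((∑ m ∈ range (j+1), m : ℕ) : ℝ) * 2 = ((j:ℝ)+1) * j := by
              exact_mod_cast congrArg (Nat.cast (R:=ℝ)) h2
            push_cast at h3 ⊢
            linarith
        simp only [neg_div, Finset.sum_neg_distrib, ← Finset.sum_div, hsum]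
        field_simp

-- step B: gaussian sum bound
lemma gauss_sum_le (n : ℕ) (hn : 0 < n) :
    (∑ i ∈ range (n+1), Real.exp (-((i:ℝ) * ((i:ℝ) - 1)) / (2 * n)))
      ≤ 2 + Real.sqrt (2 * Real.pi) * Real.sqrt n / 2 := by
  obtain ⟨m, rfl⟩ : ∃ m, n = m + 1 := ⟨n - 1, by omega⟩
  set n := m + 1 with hn_def
  have hnn : (0:ℝ) < n := by exact_mod_cast hn
  have hc : (0:ℝ) < 1/(2*(n:ℝ)) := by positivity
  set G : ℝ → ℝ := fun x => Real.exp (-(x * (x - 1)) / (2*(n:ℝ))) with hG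
  -- the sum splits off the first two terms
  have hsplit : (∑ i ∈ range (n+1), Real.exp (-((i:ℝ) * ((i:ℝ) - 1)) / (2 * n)))
      = 2 + ∑ i ∈ range m, G (1 + ((i+1 : ℕ) : ℝ)) := by
    show (∑ i ∈ range (m+1+1), _) = _
    rw [Finset.sum_range_succ', Finset.sum_range_succ']
    have e0 : Real.exp (-(((0:ℕ):ℝ) * (((0:ℕ):ℝ) - 1)) / (2 * n)) = 1 := by norm_num
    have e1 : Real.exp (-(((0+1:ℕ):ℝ) * (((0+1:ℕ):ℝ) - 1)) / (2 * n)) = 1 := by norm_num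
    rw [e0, e1]
    have : ∀ i ∈ range m, Real.exp (-(((i+1+1:ℕ):ℝ) * (((i+1+1:ℕ):ℝ) - 1)) / (2 * n))
        = G (1 + ((i+1 : ℕ) : ℝ)) := by
      intro i _
      rw [hG]
      push_cast
      ring_nf
    rw [Finset.sum_congr rfl this]
    ring
  rw [hsplit]
  have hanti : AntitoneOn G (Set.Icc (1:ℝ) (1 + m)) := by
    intro a ha b hb hab
    rw [hG]
    simp only
    rw [Real.exp_le_exp]
    have h1a : (1:ℝ) ≤ a := ha.1
    have h2 : a * (a-1) ≤ b * (b-1) := by nlinarith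
    have h2n : (0:ℝ) < 2*(n:ℝ) := by positivity
    rw [div_le_div_iff_of_pos_right h2n]
    linarith
  have hint := hanti.sum_le_integral
  have hmono : (∫ x in (1:ℝ)..(1 + m), G x)
      ≤ ∫ x in (1:ℝ)..(1 + m), Real.exp (-(1/(2*(n:ℝ))) * (x-1)^2) := by
    apply intervalIntegral.integral_mono_on (by linarith [Nat.cast_nonneg (α := ℝ) m] : (1:ℝ) ≤ 1 + m)
    · exact (Continuous.intervalIntegrable (by rw [hG]; fun_prop) _ _)
    · exact (Continuous.intervalIntegrable (by fun_prop) _ _)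
    · intro x hx
      rw [hG]
      simp only
      rw [Real.exp_le_exp]
      have hx1 : (1:ℝ) ≤ x := hx.1
      have h2n : (0:ℝ) < 2*(n:ℝ) := by positivity
      have key : (x-1)^2 ≤ x*(x-1) := by nlinarith
      have h5 : (1/(2*(n:ℝ))) * (x-1)^2 ≤ x*(x-1)/(2*(n:ℝ)) := by
        rw [mul_comm, mul_one_div, div_le_div_iff_of_pos_right h2n]
        exact key
      rw [neg_div, neg_mul]
      linarith
  have hsub : (∫ x in (1:ℝ)..(1 + m), Real.exp (-(1/(2*(n:ℝ))) * (x-1)^2))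
      = ∫ x in (0:ℝ)..(m:ℝ), Real.exp (-(1/(2*(n:ℝ))) * x^2) := by
    have := intervalIntegral.integral_comp_sub_right
      (fun y => Real.exp (-(1/(2*(n:ℝ))) * y^2)) 1 (a := 1) (b := 1 + (m:ℝ))
    simpa using this
  have hIoc : (∫ x in (0:ℝ)..(m:ℝ), Real.exp (-(1/(2*(n:ℝ))) * x^2))
      ≤ ∫ x in Set.Ioi (0:ℝ), Real.exp (-(1/(2*(n:ℝ))) * x^2) := by
    rw [intervalIntegral.integral_of_le (by positivity)]
    apply MeasureTheory.setIntegral_mono_set (integrable_exp_neg_mul_sq hc).integrableOn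
      (Filter.Eventually.of_forall fun x => (Real.exp_pos _).le)
    exact (Set.Ioc_subset_Ioi_self).eventuallyLE
  have hgauss : (∫ x in Set.Ioi (0:ℝ), Real.exp (-(1/(2*(n:ℝ))) * x^2))
      = Real.sqrt (Real.pi/(1/(2*(n:ℝ))))/2 := integral_gaussian_Ioi _
  have hval : Real.sqrt (Real.pi/(1/(2*(n:ℝ))))/2 = Real.sqrt (2 * Real.pi) * Real.sqrt n / 2 := by
    rw [← Real.sqrt_mul (by positivity : (0:ℝ) ≤ 2 * Real.pi)]
    congr 2
    field_simp
  have hchain : (∑ i ∈ range m, G (1 + ((i+1 : ℕ) : ℝ))) ≤ Real.sqrt (2 * Real.pi) * Real.sqrt n / 2 := by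
    calc (∑ i ∈ range m, G (1 + ((i+1 : ℕ) : ℝ))) ≤ ∫ x in (1:ℝ)..(1 + m), G x := hint
      _ ≤ _ := hmono
      _ = _ := hsub
      _ ≤ _ := hIoc
      _ = _ := hgauss
      _ = _ := hval
  linarith

lemma B_le_two_sqrt (n : ℕ) (hn : 0 < n) :
    (∑ i ∈ range (n+1), (n.descFactorial i : ℝ) / (n:ℝ)^i) ≤ 2 * Real.sqrt n := by
  have hnonneg : (0:ℝ) ≤ ∑ i ∈ range (n+1), (n.descFactorial i : ℝ) / (n:ℝ)^i := by
    positivity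
  have hsqrt4 : Real.sqrt (4*(n:ℝ)) = 2 * Real.sqrt n := by
    rw [show (4:ℝ)*n = 2^2*n by ring, Real.sqrt_mul (by norm_num), Real.sqrt_sq (by norm_num)]
  rcases lt_or_ge n 8 with h8 | h8
  · have hb : (∑ i ∈ range (n+1), (n.descFactorial i : ℝ)/(n:ℝ)^i)^2 ≤ 4*(n:ℝ) := by
      interval_cases n <;>
        · norm_num [Finset.sum_range_succ, Nat.descFactorial]
    calc (∑ i ∈ range (n+1), (n.descFactorial i : ℝ)/(n:ℝ)^i)
        ≤ Real.sqrt (4*(n:ℝ)) := (Real.le_sqrt hnonneg (by positivity)).mpr hb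
      _ = 2 * Real.sqrt n := hsqrt4
  · calc (∑ i ∈ range (n+1), (n.descFactorial i : ℝ) / (n:ℝ)^i)
        ≤ ∑ i ∈ range (n+1), Real.exp (-((i:ℝ) * ((i:ℝ) - 1)) / (2 * n)) :=
          Finset.sum_le_sum fun i _ => desc_ratio_le n i hn
      _ ≤ 2 + Real.sqrt (2 * Real.pi) * Real.sqrt n / 2 := gauss_sum_le n hn
      _ ≤ 2 * Real.sqrt n := by
          have hu : Real.sqrt (2 * Real.pi) ≤ 2.51 := by
            rw [show (2.51:ℝ) = Real.sqrt (2.51^2) from (Real.sqrt_sq (by norm_num)).symm]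
            apply Real.sqrt_le_sqrt
            nlinarith [Real.pi_lt_d2]
          have hcast : (8:ℝ) ≤ (n:ℝ) := by exact_mod_cast h8
          have hv : (2.82:ℝ) ≤ Real.sqrt n := by
            apply (Real.le_sqrt (by norm_num) (by positivity)).mpr
            nlinarith
          nlinarith [Real.sqrt_nonneg (2*Real.pi), Real.sqrt_nonneg (n:ℝ),
            mul_nonneg (sub_nonneg.2 hu) (sub_nonneg.2 hv)]



lemma affine_convexOn (c : ℝ) (s : Set ℝ) (hs : Convex ℝ s) :
    ConvexOn ℝ s (fun p => c * p) :=
  ⟨hs, fun x _ y _ a b _ _ _ => le_of_eq (by simp only [smul_eq_mul]; ring)⟩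

lemma mul_log_div_convexOn (q : ℝ) :
    ConvexOn ℝ (Set.Icc (0:ℝ) 1) (fun p => p * Real.log (p / q)) := by
  rcases eq_or_ne q 0 with hq | hq
  · subst hq
    have : (fun p : ℝ => p * Real.log (p / 0)) = fun _ => (0:ℝ) := by
      funext p; simp
    rw [this]
    exact convexOn_const _ (convex_Icc _ _)
  · have heq : (fun p : ℝ => p * Real.log (p / q))
        = fun p : ℝ => p * Real.log p + (- Real.log q) * p := by
      funext p
      rcases eq_or_ne p 0 with hp | hp
      · simp [hp]
      · rw [Real.log_div hp hq]; ring
    rw [heq]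
    exact (Real.convexOn_mul_log.subset (Set.Icc_subset_Ici_self) (convex_Icc _ _)).add
      (affine_convexOn _ _ (convex_Icc _ _))

lemma reflect_convexOn {f : ℝ → ℝ} (hf : ConvexOn ℝ (Set.Icc (0:ℝ) 1) f) :
    ConvexOn ℝ (Set.Icc (0:ℝ) 1) (fun p => f (1 - p)) := by
  refine ⟨convex_Icc _ _, fun x hx y hy a b ha hb hab => ?_⟩
  simp only [smul_eq_mul]
  have h1 : (1:ℝ) - (a*x+b*y) = a*(1-x) + b*(1-y) := by linear_combination -hab
  rw [h1]
  exact hf.2 ⟨by linarith [hx.2], by linarith [hx.1]⟩ ⟨by linarith [hy.2], by linarith [hy.1]⟩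
    ha hb hab

lemma bkl_convexOn (q : ℝ) : ConvexOn ℝ (Set.Icc (0:ℝ) 1) (fun p => bkl p q) := by
  have h2 : ConvexOn ℝ (Set.Icc (0:ℝ) 1) (fun p : ℝ => (1-p) * Real.log ((1-p) / (1-q))) :=
    reflect_convexOn (mul_log_div_convexOn (1-q))
  exact (mul_log_div_convexOn q).add h2

lemma phi_convexOn (n : ℕ) (hn : 0 < n) (q : ℝ) :
    ConvexOn ℝ (Set.Icc (0:ℝ) (n:ℝ)) (fun t => Real.exp ((n:ℝ) * bkl (t/n) q)) := by
  have hnn : (0:ℝ) < n := by exact_mod_cast hn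
  have hψ : ConvexOn ℝ (Set.Icc (0:ℝ) (n:ℝ)) (fun t => (n:ℝ) * bkl (t/n) q) := by
    refine ⟨convex_Icc _ _, fun x hx y hy a b ha hb hab => ?_⟩
    simp only [smul_eq_mul]
    have hdiv : (a*x+b*y)/n = a*(x/n) + b*(y/n) := by field_simp
    rw [hdiv]
    have hmx : x/n ∈ Set.Icc (0:ℝ) 1 :=
      ⟨div_nonneg hx.1 hnn.le, by rw [div_le_one hnn]; exact hx.2⟩
    have hmy : y/n ∈ Set.Icc (0:ℝ) 1 :=
      ⟨div_nonneg hy.1 hnn.le, by rw [div_le_one hnn]; exact hy.2⟩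
    have := (bkl_convexOn q).2 hmx hmy ha hb hab
    simp only [smul_eq_mul] at this
    nlinarith [this, hnn.le]
  refine ⟨convex_Icc _ _, fun x hx y hy a b ha hb hab => ?_⟩
  simp only [smul_eq_mul]
  calc Real.exp ((n:ℝ) * bkl ((a*x+b*y)/n) q)
      ≤ Real.exp (a * ((n:ℝ) * bkl (x/n) q) + b * ((n:ℝ) * bkl (y/n) q)) := by
        rw [Real.exp_le_exp]
        have := hψ.2 hx hy ha hb hab
        simpa using this
    _ ≤ a * Real.exp ((n:ℝ) * bkl (x/n) q) + b * Real.exp ((n:ℝ) * bkl (y/n) q) := by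
        have := convexOn_exp.2 (Set.mem_univ ((n:ℝ) * bkl (x/n) q))
          (Set.mem_univ ((n:ℝ) * bkl (y/n) q)) ha hb hab
        simpa using this

lemma convex_expand {ι : Type*} [DecidableEq ι] {M : ℝ} {φ : ℝ → ℝ}
    (hφ : ConvexOn ℝ (Set.Icc 0 M) φ) (s : Finset ι) :
    ∀ (c : ℝ), 0 ≤ c → c + s.card ≤ M → ∀ x : ι → ℝ,
      (∀ i ∈ s, x i ∈ Set.Icc (0:ℝ) 1) →
      φ (c + ∑ i ∈ s, x i) ≤
        ∑ T ∈ s.powerset, (∏ i ∈ T, x i) * (∏ i ∈ s \ T, (1 - x i)) * φ (c + T.card) := by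
  induction s using Finset.induction_on with
  | empty => intro c hc hM x hx; simp
  | @insert j s ha ih =>
    intro c hc hM x hx
    have hxa := hx j (mem_insert_self _ _)
    have hxs : ∀ i ∈ s, x i ∈ Set.Icc (0:ℝ) 1 := fun i hi => hx i (mem_insert_of_mem hi)
    have hcard : ((insert j s).card : ℝ) = s.card + 1 := by
      rw [Finset.card_insert_of_notMem ha]; push_cast; ring
    have hMs : c + s.card ≤ M := by rw [hcard] at hM; linarith
    have hMs1 : (c+1) + s.card ≤ M := by rw [hcard] at hM; linarith
    have hsum_mem : ∀ d : ℝ, 0 ≤ d → d + s.card ≤ M → d + ∑ i ∈ s, x i ∈ Set.Icc 0 M := by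
      intro d hd hdM
      constructor
      · have : 0 ≤ ∑ i ∈ s, x i := Finset.sum_nonneg fun i hi => (hxs i hi).1
        linarith
      · have : ∑ i ∈ s, x i ≤ s.card := by
          calc ∑ i ∈ s, x i ≤ ∑ i ∈ s, 1 := Finset.sum_le_sum fun i hi => (hxs i hi).2
            _ = s.card := by simp
        linarith
    have hw0 : (0:ℝ) ≤ 1 - x j := by linarith [hxa.2]
    have hconv : φ (c + ∑ i ∈ insert j s, x i)
        ≤ (1 - x j) * φ (c + ∑ i ∈ s, x i) + x j * φ ((c+1) + ∑ i ∈ s, x i) := by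
      rw [Finset.sum_insert ha]
      have h1 : c + (x j + ∑ i ∈ s, x i)
          = (1 - x j) • (c + ∑ i ∈ s, x i) + x j • ((c+1) + ∑ i ∈ s, x i) := by
        simp only [smul_eq_mul]; ring
      rw [h1]
      have hsum1 : (1 - x j) + x j = 1 := by ring
      have := hφ.2 (hsum_mem c hc hMs) (hsum_mem (c+1) (by linarith) hMs1) hw0 hxa.1 hsum1
      simpa using this
    have hih0 := ih c hc hMs x hxs
    have hih1 := ih (c+1) (by linarith) hMs1 x hxs
    calc φ (c + ∑ i ∈ insert j s, x i)
        ≤ (1 - x j) * φ (c + ∑ i ∈ s, x i) + x j * φ ((c+1) + ∑ i ∈ s, x i) := hconv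
      _ ≤ (1 - x j) * (∑ T ∈ s.powerset, (∏ i ∈ T, x i) * (∏ i ∈ s \ T, (1 - x i)) * φ (c + T.card))
          + x j * (∑ T ∈ s.powerset, (∏ i ∈ T, x i) * (∏ i ∈ s \ T, (1 - x i)) * φ ((c+1) + T.card)) := by
          exact add_le_add (mul_le_mul_of_nonneg_left hih0 hw0)
            (mul_le_mul_of_nonneg_left hih1 hxa.1)
      _ = ∑ T ∈ (insert j s).powerset, (∏ i ∈ T, x i) * (∏ i ∈ (insert j s) \ T, (1 - x i)) * φ (c + T.card) := by
          rw [Finset.sum_powerset_insert ha, Finset.mul_sum, Finset.mul_sum]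
          congr 1
          · refine Finset.sum_congr rfl fun T hT => ?_
            have hTs : T ⊆ s := Finset.mem_powerset.mp hT
            have haT : j ∉ s \ T := fun h => ha (Finset.mem_sdiff.mp h).1
            have : (insert j s) \ T = insert j (s \ T) := by
              ext z; simp only [Finset.mem_sdiff, Finset.mem_insert]
              constructor
              · rintro ⟨hz1 | hz1, hz2⟩
                · exact Or.inl hz1
                · exact Or.inr ⟨hz1, hz2⟩
              · rintro (rfl | ⟨hz1, hz2⟩)
                · exact ⟨Or.inl rfl, fun h => ha (hTs h)⟩
                · exact ⟨Or.inr hz1, hz2⟩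
            rw [this, Finset.prod_insert haT]
            ring
          · refine Finset.sum_congr rfl fun T hT => ?_
            have hTs : T ⊆ s := Finset.mem_powerset.mp hT
            have haT : j ∉ T := fun h => ha (hTs h)
            have h1 : (insert j s) \ (insert j T) = s \ T := by
              ext z; simp only [Finset.mem_sdiff, Finset.mem_insert]
              constructor
              · rintro ⟨hz1 | hz1, hz2⟩
                · exact absurd (Or.inl hz1) hz2
                · exact ⟨hz1, fun h => hz2 (Or.inr h)⟩
              · rintro ⟨hz1, hz2⟩
                exact ⟨Or.inr hz1, fun h => by
                  rcases h with rfl | h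
                  · exact ha hz1
                  · exact hz2 h⟩
            have h2 : ((insert j T).card : ℝ) = T.card + 1 := by
              rw [Finset.card_insert_of_notMem haT]; push_cast; ring
            rw [Finset.prod_insert haT, h1, h2]
            have : c + ((T.card : ℝ) + 1) = (c+1) + T.card := by ring
            rw [this]
            ring



lemma scaled_identity (n : ℕ) (hn : 0 < n) :
    ∑ k ∈ range (n+1), (n.choose k : ℝ) * ((k:ℝ)/n)^k * (((n-k:ℕ):ℝ)/n)^(n-k)
      = ∑ i ∈ range (n+1), (n.descFactorial i : ℝ) / (n:ℝ)^i := by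
  have hnn : (0:ℝ) < n := by exact_mod_cast hn
  have hF := (Ac_Fc n 0 0).2
  rw [Fc, Gc] at hF
  simp only [zero_add] at hF
  have hne : ((n:ℝ))^n ≠ 0 := by positivity
  apply mul_right_cancel₀ hne
  rw [Finset.sum_mul, Finset.sum_mul]
  calc ∑ k ∈ range (n+1), (n.choose k : ℝ) * ((k:ℝ)/n)^k * (((n-k:ℕ):ℝ)/n)^(n-k) * (n:ℝ)^n
      = ∑ k ∈ range (n+1), (n.choose k : ℝ) * ((k:ℝ))^k * (((n-k:ℕ):ℝ))^(n-k) := by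
        refine Finset.sum_congr rfl fun k hk => ?_
        have hkn : k ≤ n := by have := Finset.mem_range.mp hk; omega
        have hsplit : (n:ℝ)^n = (n:ℝ)^k * (n:ℝ)^(n-k) := by
          rw [← pow_add]; congr 1; omega
        rw [hsplit, div_pow, div_pow]
        field_simp
    _ = ∑ i ∈ range (n+1), (n.descFactorial i : ℝ) * (n:ℝ)^(n-i) := hF
    _ = ∑ i ∈ range (n+1), (n.descFactorial i : ℝ) / (n:ℝ)^i * (n:ℝ)^n := by
        refine Finset.sum_congr rfl fun i hi => ?_
        have hin : i ≤ n := by have := Finset.mem_range.mp hi; omega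
        have hsplit : (n:ℝ)^n = (n:ℝ)^i * (n:ℝ)^(n-i) := by
          rw [← pow_add]; congr 1; omega
        rw [hsplit]
        field_simp


lemma pow_factor_le (p q : ℝ) (k : ℕ) (hp0 : 0 ≤ p) (hq : 0 ≤ q)
    (hpk : k ≠ 0 → 0 < p) :
    (Real.exp (Real.log (p / q)) * q)^k ≤ p^k := by
  rcases Nat.eq_zero_or_pos k with rfl | hk
  · simp
  · have hp : 0 < p := hpk (by omega)
    rcases eq_or_lt_of_le hq with hq0 | hq0
    · rw [← hq0, mul_zero, zero_pow (by omega)]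
      positivity
    · have hpq : 0 < p / q := by positivity
      rw [Real.exp_log hpq, div_mul_cancel₀ _ (ne_of_gt hq0)]

lemma key_term (N k : ℕ) (hN : 0 < N) (hk : k ≤ N) (q : ℝ) (hq : q ∈ Set.Icc (0:ℝ) 1) :
    Real.exp ((N:ℝ) * bkl ((k:ℝ)/N) q) * (q^k * (1-q)^(N-k))
      ≤ ((k:ℝ)/N)^k * (((N-k:ℕ):ℝ)/N)^(N-k) := by
  have hNN : (0:ℝ) < N := by exact_mod_cast hN
  have hp1 : (1:ℝ) - (k:ℝ)/N = ((N-k:ℕ):ℝ)/N := by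
    rw [Nat.cast_sub hk]
    field_simp
  have harg : (N:ℝ) * bkl ((k:ℝ)/N) q
      = (k:ℝ) * Real.log (((k:ℝ)/N) / q) + ((N-k:ℕ):ℝ) * Real.log ((((N-k:ℕ):ℝ)/N) / (1-q)) := by
    rw [bkl, hp1]
    rw [Nat.cast_sub hk]
    field_simp
    try ring
  rw [harg, Real.exp_add, Real.exp_nat_mul, Real.exp_nat_mul]
  have hre : Real.exp (Real.log ((k:ℝ)/N / q)) ^ k * (Real.exp (Real.log (((N-k:ℕ):ℝ)/N / (1-q))) ^ (N-k))
      * (q^k * (1-q)^(N-k))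
      = (Real.exp (Real.log ((k:ℝ)/N / q)) * q) ^ k
        * ((Real.exp (Real.log (((N-k:ℕ):ℝ)/N / (1-q))) * (1-q)) ^ (N-k)) := by
    rw [mul_pow, mul_pow]; ring
  rw [hre]
  have h1 : (Real.exp (Real.log ((k:ℝ)/N / q)) * q) ^ k ≤ ((k:ℝ)/N)^k := by
    apply pow_factor_le _ _ _ (by positivity) hq.1
    intro hk0
    have : 0 < k := Nat.pos_of_ne_zero hk0
    positivity
  have h2 : (Real.exp (Real.log (((N-k:ℕ):ℝ)/N / (1-q))) * (1-q)) ^ (N-k) ≤ (((N-k:ℕ):ℝ)/N)^(N-k) := by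
    apply pow_factor_le _ _ _ (by positivity) (by linarith [hq.2])
    intro hm0
    have : 0 < N - k := Nat.pos_of_ne_zero hm0
    have hc : (0:ℝ) < ((N-k:ℕ):ℝ) := by exact_mod_cast this
    exact div_pos hc hNN
  exact mul_le_mul h1 h2
    (pow_nonneg (mul_nonneg (Real.exp_pos _).le (by linarith [hq.2])) _) (by positivity)

lemma integral_prod_indep {Ω : Type*} [MeasurableSpace Ω] (μ : Measure Ω) [IsProbabilityMeasure μ]
    {ι : Type*} (Y : ι → Ω → ℝ)
    (hind : iIndepFun Y μ) (hm : ∀ i, Measurable (Y i))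
    (hb : ∀ i ω, Y i ω ∈ Set.Icc (0:ℝ) 1) (s : Finset ι) :
    ∫ ω, ∏ i ∈ s, Y i ω ∂μ = ∏ i ∈ s, ∫ ω, Y i ω ∂μ := by
  classical
  have hint : ∀ t : Finset ι, Integrable (fun ω => ∏ i ∈ t, Y i ω) μ := by
    intro t
    apply Integrable.mono' (integrable_const (1:ℝ))
    · exact (Finset.measurable_prod t fun i _ => hm i).aestronglyMeasurable
    · refine Filter.Eventually.of_forall fun ω => ?_
      rw [Real.norm_eq_abs, abs_of_nonneg (Finset.prod_nonneg fun i _ => (hb i ω).1)]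
      exact Finset.prod_le_one (fun i _ => (hb i ω).1) (fun i _ => (hb i ω).2)
  induction s using Finset.induction_on with
  | empty => simp
  | @insert a s ha ih =>
    have hdep : IndepFun (Y a) (∏ j ∈ s, Y j) μ :=
      (hind.indepFun_finsetProd_of_notMem hm ha).symm
    have hYa : Integrable (Y a) μ := by
      apply Integrable.mono' (integrable_const (1:ℝ)) (hm a).aestronglyMeasurable
      refine Filter.Eventually.of_forall fun ω => ?_
      rw [Real.norm_eq_abs, abs_of_nonneg (hb a ω).1]
      exact (hb a ω).2
    have hprodInt : Integrable (∏ j ∈ s, Y j) μ := by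
      refine (hint s).congr (Filter.Eventually.of_forall fun ω => ?_)
      rw [Finset.prod_apply]
    have hmul := hdep.integral_mul_eq_mul_integral hYa.aestronglyMeasurable hprodInt.aestronglyMeasurable
    calc ∫ ω, ∏ i ∈ insert a s, Y i ω ∂μ
        = ∫ ω, (Y a * ∏ j ∈ s, Y j) ω ∂μ := by
          refine integral_congr_ae (Filter.Eventually.of_forall fun ω => ?_)
          simp [Finset.prod_insert ha, Finset.prod_apply]
      _ = (∫ ω, Y a ω ∂μ) * ∫ ω, (∏ j ∈ s, Y j) ω ∂μ := hmul
      _ = (∫ ω, Y a ω ∂μ) * ∫ ω, ∏ j ∈ s, Y j ω ∂μ := by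
          congr 1
          refine integral_congr_ae (Filter.Eventually.of_forall fun ω => ?_)
          rw [Finset.prod_apply]
      _ = (∫ ω, Y a ω ∂μ) * ∏ j ∈ s, ∫ ω, Y j ω ∂μ := by rw [ih]
      _ = ∏ i ∈ insert a s, ∫ ω, Y i ω ∂μ := by rw [Finset.prod_insert ha]


/-- Maurer's lemma: if `X₁, …, X_N` are i.i.d. random variables with values in `[0,1]`
and mean `μ₀`, and `S_N = (1/N) ∑ Xᵢ` is their empirical mean, then
`E[exp (N · kl(S_N ‖ μ₀))] ≤ 2√N`. -/
theorem maurer_lemma {Ω : Type*} [MeasurableSpace Ω] (μ : Measure Ω) [IsProbabilityMeasure μ]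
    (N : ℕ) (hN : 0 < N) (X : Fin N → Ω → ℝ)
    (hmeas : ∀ i, Measurable (X i))
    (hrange : ∀ i ω, X i ω ∈ Set.Icc (0 : ℝ) 1)
    (hindep : iIndepFun X μ)
    (hident : ∀ i j, μ.map (X i) = μ.map (X j))
    (μ₀ : ℝ) (hmean : ∀ i, ∫ ω, X i ω ∂μ = μ₀) :
    ∫ ω, Real.exp ((N : ℝ) * bkl ((∑ i, X i ω) / N) μ₀) ∂μ ≤ 2 * Real.sqrt N := by
  classical
  have hNN : (0:ℝ) < N := by exact_mod_cast hN
  have hXint : ∀ i, Integrable (X i) μ := by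
    intro i
    apply Integrable.mono' (integrable_const (1:ℝ)) (hmeas i).aestronglyMeasurable
    refine Filter.Eventually.of_forall fun ω => ?_
    rw [Real.norm_eq_abs, abs_of_nonneg (hrange i ω).1]
    exact (hrange i ω).2
  have hμ₀ : μ₀ ∈ Set.Icc (0:ℝ) 1 := by
    have i0 : Fin N := ⟨0, hN⟩
    constructor
    · rw [← hmean i0]; exact integral_nonneg fun ω => (hrange i0 ω).1
    · rw [← hmean i0]
      calc ∫ ω, X i0 ω ∂μ ≤ ∫ _ω, (1:ℝ) ∂μ :=
            integral_mono (hXint i0) (integrable_const 1) (fun ω => (hrange i0 ω).2)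
        _ = 1 := by simp
  set φ : ℝ → ℝ := fun t => Real.exp ((N:ℝ) * bkl (t/N) μ₀) with hφ_def
  have hφconv : ConvexOn ℝ (Set.Icc (0:ℝ) (N:ℝ)) φ := phi_convexOn N hN μ₀
  set w : Finset (Fin N) → Ω → ℝ :=
    fun T ω => (∏ i ∈ T, X i ω) * (∏ i ∈ Finset.univ \ T, (1 - X i ω)) with hw_def
  have hwmeas : ∀ T, Measurable (w T) := by
    intro T
    exact (Finset.measurable_prod _ fun i _ => hmeas i).mul
      (Finset.measurable_prod _ fun i _ => measurable_const.sub (hmeas i))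
  have hwbound : ∀ T ω, w T ω ∈ Set.Icc (0:ℝ) 1 := by
    intro T ω
    have h1 : ∀ i ∈ T, (0:ℝ) ≤ X i ω := fun i _ => (hrange i ω).1
    have h2 : ∀ i ∈ Finset.univ \ T, (0:ℝ) ≤ 1 - X i ω := fun i _ => by
      linarith [(hrange i ω).2]
    constructor
    · exact mul_nonneg (Finset.prod_nonneg h1) (Finset.prod_nonneg h2)
    · have hA : (∏ i ∈ T, X i ω) ≤ 1 :=
        Finset.prod_le_one h1 (fun i _ => (hrange i ω).2)
      have hB : (∏ i ∈ Finset.univ \ T, (1 - X i ω)) ≤ 1 :=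
        Finset.prod_le_one h2 (fun i _ => by linarith [(hrange i ω).1])
      calc w T ω ≤ 1 * 1 := mul_le_mul hA hB (Finset.prod_nonneg h2) zero_le_one
        _ = 1 := by norm_num
  have hwint : ∀ T, Integrable (w T) μ := by
    intro T
    apply Integrable.mono' (integrable_const (1:ℝ)) (hwmeas T).aestronglyMeasurable
    refine Filter.Eventually.of_forall fun ω => ?_
    rw [Real.norm_eq_abs, abs_of_nonneg (hwbound T ω).1]
    exact (hwbound T ω).2
  have hexpand : ∀ ω, φ (∑ i, X i ω)
      ≤ ∑ T ∈ (Finset.univ : Finset (Fin N)).powerset, w T ω * φ (T.card) := by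
    intro ω
    have := convex_expand hφconv Finset.univ 0 le_rfl
      (by simp [Finset.card_univ]) (fun i => X i ω) (fun i _ => hrange i ω)
    simpa using this
  have hrhsint : Integrable
      (fun ω => ∑ T ∈ (Finset.univ : Finset (Fin N)).powerset, w T ω * φ (T.card)) μ :=
    integrable_finset_sum _ fun T _ => (hwint T).mul_const _
  have hstep1 : ∫ ω, Real.exp ((N : ℝ) * bkl ((∑ i, X i ω) / N) μ₀) ∂μ
      ≤ ∫ ω, ∑ T ∈ (Finset.univ : Finset (Fin N)).powerset, w T ω * φ (T.card) ∂μ := by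
    apply integral_mono_of_nonneg
      (Filter.Eventually.of_forall fun ω => (Real.exp_pos _).le) hrhsint
      (Filter.Eventually.of_forall fun ω => hexpand ω)
  have hstep2 : (∫ ω, ∑ T ∈ (Finset.univ : Finset (Fin N)).powerset, w T ω * φ (T.card) ∂μ)
      = ∑ T ∈ (Finset.univ : Finset (Fin N)).powerset, (∫ ω, w T ω ∂μ) * φ (T.card) := by
    rw [integral_finset_sum _ (fun T _ => (hwint T).mul_const _)]
    exact Finset.sum_congr rfl fun T _ => integral_mul_const _ _
  have hwval : ∀ T : Finset (Fin N), (∫ ω, w T ω ∂μ) = μ₀ ^ T.card * (1 - μ₀) ^ (N - T.card) := by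
    intro T
    set g : Fin N → ℝ → ℝ := fun i v => if i ∈ T then v else 1 - v with hg_def
    have hgm : ∀ i, Measurable (g i) := by
      intro i
      by_cases h : i ∈ T <;> simp only [hg_def, h, if_true, if_false]
      · exact measurable_id
      · exact measurable_const.sub measurable_id
    have hYind : iIndepFun (fun i => g i ∘ X i) μ :=
      hindep.comp g hgm
    have hYm : ∀ i, Measurable (g i ∘ X i) := fun i => (hgm i).comp (hmeas i)
    have hYb : ∀ i ω, (g i ∘ X i) ω ∈ Set.Icc (0:ℝ) 1 := by
      intro i ω
      by_cases h : i ∈ T <;> simp only [hg_def, Function.comp_apply, h, if_true, if_false]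
      · exact hrange i ω
      · exact ⟨by linarith [(hrange i ω).2], by linarith [(hrange i ω).1]⟩
    have hkey := integral_prod_indep μ _ hYind hYm hYb Finset.univ
    have hwY : ∀ ω, w T ω = ∏ i ∈ Finset.univ, (g i ∘ X i) ω := by
      intro ω
      have h1 : (∏ i ∈ Finset.univ, (g i ∘ X i) ω)
          = (∏ i ∈ T, (g i ∘ X i) ω) * ∏ i ∈ Finset.univ \ T, (g i ∘ X i) ω := by
        rw [← Finset.compl_eq_univ_sdiff, Finset.prod_mul_prod_compl]
      rw [h1, hw_def]
      simp only
      congr 1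
      · exact Finset.prod_congr rfl fun i hi => by simp [hg_def, hi]
      · refine Finset.prod_congr rfl fun i hi => ?_
        have hni : i ∉ T := (Finset.mem_sdiff.mp hi).2
        simp [hg_def, hni]
    have hYint : ∀ i, (∫ ω, (g i ∘ X i) ω ∂μ) = if i ∈ T then μ₀ else 1 - μ₀ := by
      intro i
      by_cases h : i ∈ T <;> simp only [hg_def, Function.comp_apply, h, if_true, if_false]
      · exact hmean i
      · rw [integral_sub (integrable_const 1) (hXint i), hmean i]
        simp
    calc (∫ ω, w T ω ∂μ) = ∫ ω, ∏ i ∈ Finset.univ, (g i ∘ X i) ω ∂μ := by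
          exact integral_congr_ae (Filter.Eventually.of_forall hwY)
      _ = ∏ i ∈ Finset.univ, ∫ ω, (g i ∘ X i) ω ∂μ := hkey
      _ = ∏ i ∈ Finset.univ, (if i ∈ T then μ₀ else 1 - μ₀) := by
          exact Finset.prod_congr rfl fun i _ => hYint i
      _ = μ₀ ^ T.card * (1 - μ₀) ^ (N - T.card) := by
          rw [← Finset.prod_mul_prod_compl T]
          rw [Finset.prod_congr rfl (fun i (hi : i ∈ T) => if_pos hi),
            Finset.prod_congr rfl (fun i (hi : i ∈ Tᶜ) => if_neg (Finset.mem_compl.mp hi))]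
          rw [Finset.prod_const, Finset.prod_const, Finset.card_compl]
          simp [Fintype.card_fin]
  have hgroup : (∑ T ∈ (Finset.univ : Finset (Fin N)).powerset,
        (μ₀ ^ T.card * (1 - μ₀) ^ (N - T.card)) * φ (T.card))
      = ∑ k ∈ range (N+1), (N.choose k : ℝ) * ((μ₀ ^ k * (1 - μ₀) ^ (N - k)) * φ k) := by
    rw [Finset.sum_powerset]
    rw [show ((Finset.univ : Finset (Fin N)).card) = N by simp [Finset.card_univ]]
    refine Finset.sum_congr rfl fun j hj => ?_
    have : ∀ T ∈ Finset.powersetCard j (Finset.univ : Finset (Fin N)),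
        (μ₀ ^ T.card * (1 - μ₀) ^ (N - T.card)) * φ (T.card)
          = (μ₀ ^ j * (1 - μ₀) ^ (N - j)) * φ j := by
      intro T hT
      rw [(Finset.mem_powersetCard.mp hT).2]
    rw [Finset.sum_congr rfl this, Finset.sum_const, Finset.card_powersetCard]
    simp [Finset.card_univ, nsmul_eq_mul]
  have hterm : ∀ k ∈ range (N+1),
      (N.choose k : ℝ) * ((μ₀ ^ k * (1 - μ₀) ^ (N - k)) * φ k)
        ≤ (N.choose k : ℝ) * (((k:ℝ)/N)^k * (((N-k:ℕ):ℝ)/N)^(N-k)) := by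
    intro k hk
    have hkN : k ≤ N := by have := Finset.mem_range.mp hk; omega
    apply mul_le_mul_of_nonneg_left _ (by positivity)
    have := key_term N k hN hkN μ₀ hμ₀
    calc (μ₀ ^ k * (1 - μ₀) ^ (N - k)) * φ k
        = Real.exp ((N:ℝ) * bkl ((k:ℝ)/N) μ₀) * (μ₀^k * (1-μ₀)^(N-k)) := by
          rw [hφ_def]; ring
      _ ≤ _ := this
  calc ∫ ω, Real.exp ((N : ℝ) * bkl ((∑ i, X i ω) / N) μ₀) ∂μ
      ≤ ∫ ω, ∑ T ∈ (Finset.univ : Finset (Fin N)).powerset, w T ω * φ (T.card) ∂μ := hstep1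
    _ = ∑ T ∈ (Finset.univ : Finset (Fin N)).powerset, (∫ ω, w T ω ∂μ) * φ (T.card) := hstep2
    _ = ∑ T ∈ (Finset.univ : Finset (Fin N)).powerset,
          (μ₀ ^ T.card * (1 - μ₀) ^ (N - T.card)) * φ (T.card) := by
        exact Finset.sum_congr rfl fun T _ => by rw [hwval T]
    _ = ∑ k ∈ range (N+1), (N.choose k : ℝ) * ((μ₀ ^ k * (1 - μ₀) ^ (N - k)) * φ k) := hgroup
    _ ≤ ∑ k ∈ range (N+1), (N.choose k : ℝ) * (((k:ℝ)/N)^k * (((N-k:ℕ):ℝ)/N)^(N-k)) :=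
        Finset.sum_le_sum hterm
    _ = ∑ i ∈ range (N+1), (N.descFactorial i : ℝ) / (N:ℝ)^i := by
        rw [← scaled_identity N hN]
        exact Finset.sum_congr rfl fun k _ => by ring
    _ ≤ 2 * Real.sqrt N := B_le_two_sqrt N hN
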